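/- For every nonnegative integer k and every complex z with |z| > k, the inverse Pochhammer symbol admits the convergent expansion 1/((z)_{k+1}) = Σ_{κ=0}^{∞} (-1)^κ S²(k+κ, k) / z^{k+κ+1}. -/

import Mathlib

noncomputable def poch (z : ℂ) (m : ℕ) : ℂ := ∏ i ∈ Finset.range m, (z + i)

def S2 : ℕ → ℕ → ℕ
  | 0, 0 => 1
  | 0, _ + 1 => 0
  | _ + 1, 0 => 0
  | n + 1, k + 1 => S2 n k + (k + 1) * S2 n (k + 1)


lemma S2_succ_zero (n : ℕ) : S2 (n+1) 0 = 0 := rfl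

lemma S2_succ_succ (n k : ℕ) : S2 (n+1) (k+1) = S2 n k + (k+1) * S2 n (k+1) := rfl

lemma S2_eq_zero : ∀ {n m : ℕ}, n < m → S2 n m = 0 := by
  intro n
  induction n with
  | zero => intro m h; cases m with | zero => omega | succ m => rfl
  | succ n ih =>
    intro m h
    cases m with
    | zero => omega
    | succ m =>
      rw [S2_succ_succ, ih (by omega), ih (by omega)]
      ring

lemma S2_self (n : ℕ) : S2 n n = 1 := by
  induction n with
  | zero => rfl
  | succ n ih => rw [S2_succ_succ, ih, S2_eq_zero (by omega)]; ring

lemma S2_le (k : ℕ) : ∀ κ : ℕ, S2 (k + κ) k ≤ (k + κ).choose κ * k ^ κ := by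
  induction k with
  | zero =>
    intro κ
    cases κ with
    | zero => simp [S2]
    | succ κ => simp [S2_succ_zero]
  | succ k ih =>
    intro κ
    induction κ with
    | zero => simp [S2_self]
    | succ κ ihκ =>
      have h1 : k + 1 + (κ + 1) = (k + 1 + κ) + 1 := by omega
      rw [h1, S2_succ_succ]
      have h2 : k + 1 + κ = k + (κ + 1) := by omega
      have e1 : S2 (k + 1 + κ) k ≤ (k + (κ+1)).choose (κ+1) * k ^ (κ+1) := by
        rw [h2]; exact ih (κ+1)
      have e2 : S2 (k + 1 + κ) (k + 1) ≤ (k + 1 + κ).choose κ * (k+1) ^ κ := ihκ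
      calc S2 (k + 1 + κ) k + (k + 1) * S2 (k + 1 + κ) (k + 1)
          ≤ (k + (κ+1)).choose (κ+1) * k ^ (κ+1) + (k + 1) * ((k + 1 + κ).choose κ * (k+1) ^ κ) := by
            exact Nat.add_le_add e1 (Nat.mul_le_mul_left _ e2)
        _ ≤ (k + (κ+1)).choose (κ+1) * (k+1) ^ (κ+1) + (k + 1 + κ).choose κ * (k+1) ^ (κ+1) :=
            Nat.add_le_add (Nat.mul_le_mul_left _ (Nat.pow_le_pow_left (Nat.le_succ k) _))
              (le_of_eq (by ring))
        _ = ((k + 1 + κ) + 1).choose (κ+1) * (k+1) ^ (κ+1) := by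
            rw [Nat.choose_succ_succ]
            have : k + (κ+1) = k + 1 + κ := by omega
            rw [this]; ring

lemma choose_le (k : ℕ) : ∀ κ : ℕ, (k + κ).choose k ≤ (κ + 1) ^ k := by
  induction k with
  | zero => intro κ; simp
  | succ k ih =>
    intro κ
    have h := Nat.add_one_mul_choose_eq (k + κ) k
    have hle : ((k+1) + κ).choose (k+1) * (k+1) ≤ (κ+1)^(k+1) * (k+1) := by
      have : ((k+1) + κ).choose (k+1) * (k+1) = (k+κ+1) * (k+κ).choose k := by
        have e : (k+1) + κ = (k+κ) + 1 := by omega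
        rw [e]; simpa using h.symm
      rw [this]
      calc (k+κ+1) * (k+κ).choose k ≤ ((k+1)*(κ+1)) * (κ+1)^k :=
            Nat.mul_le_mul (by nlinarith) (ih κ)
        _ = (κ+1)^(k+1) * (k+1) := by ring
    exact Nat.le_of_mul_le_mul_right hle (by omega)

lemma S2_le' (k κ : ℕ) : S2 (k + κ) k ≤ (κ + 1) ^ k * k ^ κ := by
  calc S2 (k + κ) k ≤ (k + κ).choose κ * k ^ κ := S2_le k κ
    _ ≤ (κ + 1) ^ k * k ^ κ := by
        apply Nat.mul_le_mul_right
        have : (k + κ).choose κ = (k + κ).choose k := by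
          rw [← Nat.choose_symm (by omega)]
          congr 1
          omega
        rw [this]
        exact choose_le k κ

lemma summable_aux (k : ℕ) (z : ℂ) (hz : (k:ℝ) < ‖z‖) :
    Summable (fun κ : ℕ => (-1)^κ * (S2 (k+κ) k : ℂ) / z^(k+κ+1)) := by
  have hz0 : (0:ℝ) < ‖z‖ := lt_of_le_of_lt (Nat.cast_nonneg k) hz
  rcases Nat.eq_zero_or_pos k with hk | hk
  · subst hk
    apply summable_of_ne_finset_zero (s := ({0} : Finset ℕ))
    intro b hb
    simp only [Finset.mem_singleton] at hb
    obtain ⟨b, rfl⟩ := Nat.exists_eq_succ_of_ne_zero hb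
    simp [S2_succ_zero]
  · set r : ℝ := (k:ℝ)/‖z‖ with hr
    have hr0 : 0 < r := div_pos (by exact_mod_cast hk) hz0
    have hr1 : r < 1 := (div_lt_one hz0).mpr hz
    have hsum : Summable (fun n : ℕ => (n:ℝ)^k * r^n) := by
      apply summable_pow_mul_geometric_of_norm_lt_one
      rwa [Real.norm_of_nonneg hr0.le]
    have hsum2 : Summable (fun n : ℕ => ((n:ℝ)+1)^k * r^(n+1)) := by
      apply (hsum.comp_injective Nat.succ_injective).congr
      intro n
      simp only [Function.comp]
      push_cast [pow_succ]
      ring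
    have hsum3 : Summable (fun n : ℕ => ((n:ℝ)+1)^k * r^n) := by
      have := hsum2.mul_left r⁻¹
      apply this.congr
      intro n
      rw [pow_succ]
      field_simp
    apply Summable.of_norm_bounded (hsum3.mul_left (1/‖z‖^(k+1)))
    intro κ
    have hb : (S2 (k+κ) k : ℝ) ≤ ((κ:ℝ)+1)^k * (k:ℝ)^κ := by
      exact_mod_cast S2_le' k κ
    have hnorm : ‖(-1:ℂ)^κ * (S2 (k+κ) k : ℂ) / z^(k+κ+1)‖ =
        (S2 (k+κ) k : ℝ) / ‖z‖^(k+κ+1) := by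
      rw [norm_div, norm_mul, norm_pow, norm_pow, norm_neg, norm_one, one_pow, one_mul,
        Complex.norm_natCast]
    rw [hnorm]
    have : 1/‖z‖^(k+1) * (((κ:ℝ)+1)^k * r^κ) = (((κ:ℝ)+1)^k * (k:ℝ)^κ) / ‖z‖^(k+κ+1) := by
      rw [hr, div_pow]
      field_simp
      ring
    rw [this]
    gcongr

lemma poch_ne_zero (k : ℕ) (z : ℂ) (hz : (k:ℝ) < ‖z‖) : poch z (k+1) ≠ 0 := by
  simp only [poch]
  apply Finset.prod_ne_zero_iff.mpr
  intro i hi h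
  have hzi : z = -(i:ℂ) := by linear_combination h
  rw [hzi] at hz
  rw [norm_neg, Complex.norm_natCast] at hz
  have hik := Finset.mem_range.mp hi
  have : (k:ℝ) < (i:ℝ) := hz
  have : k < i := by exact_mod_cast this
  omega

lemma main_aux : ∀ (k : ℕ) (z : ℂ), (k : ℝ) < ‖z‖ →
    HasSum (fun κ : ℕ => (-1) ^ κ * (S2 (k + κ) k : ℂ) / z ^ (k + κ + 1))
      (1 / poch z (k + 1)) := by
  intro k
  induction k with
  | zero =>
    intro z hz
    simp only [Nat.cast_zero] at hz
    have hz0 : z ≠ 0 := by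
      intro h; rw [h] at hz; simp at hz
    have hfun : (fun κ : ℕ => (-1) ^ κ * (S2 (0 + κ) 0 : ℂ) / z ^ (0 + κ + 1)) =
        fun κ => if κ = (0:ℕ) then 1/z else 0 := by
      funext κ
      cases κ with
      | zero => simp [S2]
      | succ κ => simp [S2_succ_zero]
    rw [hfun]
    have h := hasSum_ite_eq (0:ℕ) (1/z)
    simpa [poch] using h
  | succ k ih =>
    intro z hz
    have hzk : (k:ℝ) < ‖z‖ := by push_cast at hz ⊢; linarith
    have hz0 : (0:ℝ) < ‖z‖ := lt_of_le_of_lt (Nat.cast_nonneg _) hz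
    have hzne : z ≠ 0 := by
      intro h; rw [h] at hz0; simp at hz0
    have hzk1 : z + ((k:ℂ)+1) ≠ 0 := by
      intro h
      have hzi : z = -(((k+1:ℕ)):ℂ) := by push_cast; linear_combination h
      rw [hzi, norm_neg, Complex.norm_natCast] at hz
      exact lt_irrefl _ hz
    set a : ℕ → ℂ := fun κ => (-1) ^ κ * (S2 (k + 1 + κ) (k+1) : ℂ) / z ^ (k + 1 + κ + 1) with ha
    have hsumm : Summable a := summable_aux (k+1) z hz
    set S : ℂ := ∑' κ, a κ with hS
    have hA : HasSum a S := hsumm.hasSum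
    have hZA : HasSum (fun κ => z * a κ) (z * S) := hA.mul_left z
    have hKA : HasSum (fun κ => ((k:ℂ)+1) * a κ) (((k:ℂ)+1) * S) := hA.mul_left _
    set f : ℕ → ℂ := fun κ => if κ = 0 then 0 else ((k:ℂ)+1) * a (κ - 1) with hf
    have hF : HasSum f (((k:ℂ)+1) * S) := by
      have h1 : HasSum (fun n => f (n + 1)) (((k:ℂ)+1) * S) := by
        simpa [hf] using hKA
      have h2 := (hasSum_nat_add_iff (f := f) 1).mp h1
      simpa [hf] using h2
    have hB : HasSum (fun κ => z * a κ + f κ) (z*S + ((k:ℂ)+1)*S) := hZA.add hF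
    have hpt : (fun κ => z * a κ + f κ) =
        (fun κ : ℕ => (-1) ^ κ * (S2 (k + κ) k : ℂ) / z ^ (k + κ + 1)) := by
      funext κ
      cases κ with
      | zero =>
        simp only [hf, ha, if_pos rfl, add_zero, S2_self, Nat.cast_one, pow_zero, one_mul]
        field_simp
        ring
      | succ κ =>
        have hrec : S2 (k+1+(κ+1)) (k+1) = S2 (k+κ+1) k + (k+1) * S2 (k+κ+1) (k+1) := by
          have e : k+1+(κ+1) = (k+κ+1)+1 := by omega
          rw [e, S2_succ_succ]
        simp only [hf, ha, Nat.succ_ne_zero, if_false, Nat.succ_sub_one]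
        rw [hrec]
        push_cast
        have e1 : k+1+(κ+1)+1 = (k+(κ+1)+1)+1 := by omega
        have e2 : k+1+κ+1 = k+(κ+1)+1 := by omega
        rw [e1, e2]
        field_simp
        ring
    rw [hpt] at hB
    have huniq : z*S + ((k:ℂ)+1)*S = 1 / poch z (k+1) := hB.unique (ih z hzk)
    have hpoch : poch z (k+1+1) = poch z (k+1) * (z + ((k:ℂ)+1)) := by
      simp only [poch, Finset.prod_range_succ]
      push_cast
      ring
    have hP : poch z (k+1) ≠ 0 := poch_ne_zero k z hzk
    have hfin : S = 1 / poch z (k+1+1) := by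
      rw [hpoch]
      have h3 : (z + ((k:ℂ)+1)) * S = 1 / poch z (k+1) := by linear_combination huniq
      field_simp at h3 ⊢
      linear_combination h3
    rw [← hfin]
    exact hA

theorem stmt13 (k : ℕ) (z : ℂ) (hz : (k : ℝ) < ‖z‖) :
    HasSum (fun κ : ℕ => (-1) ^ κ * (S2 (k + κ) k : ℂ) / z ^ (k + κ + 1))
      (1 / poch z (k + 1)) := main_aux k z hz
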